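/- Let δ be a finite C-sequence dataset, ξ ≥ 0 a minimum utility threshold, and k a positive integer. If an L-sequence L satisfies LWU_k(L) < ξ (i.e., L is unpromising), then every L-sequence L' with |L'| ≤ k that contains L as an L-subsequence is of low utility, i.e., u_max(L') < ξ. -/

import Mathlib

open scoped Classical

/-- A C-eventset: a finite set of event labels together with a duration. -/
abbrev CEventset (α : Type*) := Finset α × ℕ

/-- A C-sequence: a finite list of C-eventsets. -/
abbrev CSeq (α : Type*) := List (CEventset α)

/-- An L-sequence: a finite list of (nonempty) finite label sets. -/
abbrev LSeq (α : Type*) := List (Finset α)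

/-- Utility of a C-eventset: duration times the sum of external utilities of its labels. -/
noncomputable def ue {α : Type*} (p : α → NNReal) (σ : CEventset α) : NNReal :=
  (σ.2 : NNReal) * ∑ l ∈ σ.1, p l

/-- Utility of a C-sequence: the sum of the utilities of its C-eventsets. -/
noncomputable def us {α : Type*} (p : α → NNReal) (C : CSeq α) : NNReal :=
  (C.map (ue p)).sum

/-- Containment of C-eventsets: label-set inclusion with equal durations. -/
def CContains {α : Type*} (σa σb : CEventset α) : Prop :=
  σa.1 ⊆ σb.1 ∧ σa.2 = σb.2

/-- `C` is a C-subsequence of `C'`: there is a strictly increasing index map under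
which each C-eventset of `C` is contained in the corresponding one of `C'`. -/
def CSub {α : Type*} (C C' : CSeq α) : Prop :=
  ∃ C₂ : CSeq α, C₂.Sublist C' ∧ List.Forall₂ CContains C C₂

/-- A C-sequence matches an L-sequence iff they have equal length and the label set of
each C-eventset equals the corresponding label set of the L-sequence. -/
def Matches {α : Type*} (C : CSeq α) (L : LSeq α) : Prop :=
  C.map Prod.fst = L

/-- `L` is an L-subsequence of `L'`. -/
def LSub {α : Type*} (L L' : LSeq α) : Prop :=
  ∃ L₂ : LSeq α, L₂.Sublist L' ∧ List.Forall₂ (· ⊆ ·) L L₂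

/-- Maximum of the utility set `u_l(L, C)` (max of the empty set is 0). -/
noncomputable def ulMax {α : Type*} (p : α → NNReal) (L : LSeq α) (C : CSeq α) : NNReal :=
  sSup {x | ∃ C', Matches C' L ∧ CSub C' C ∧ us p C' = x}

/-- Maximum utility `u_max(L)` of an L-sequence in a C-sequence dataset. -/
noncomputable def umax {α : Type*} (p : α → NNReal) (δ : Finset (CSeq α)) (L : LSeq α) :
    NNReal :=
  ∑ C ∈ δ, ulMax p L C

/-- Maximum utility of `k` C-eventsets in a C-sequence (max of the empty set is 0). -/
noncomputable def umaxk {α : Type*} (p : α → NNReal) (C : CSeq α) (k : ℕ) : NNReal :=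
  sSup {x | ∃ C', CSub C' C ∧ C'.length ≤ k ∧ us p C' = x}

/-- L-sequence-weighted utilization `LWU_k(L)` over the dataset `δ`. -/
noncomputable def LWU {α : Type*} (p : α → NNReal) (δ : Finset (CSeq α)) (k : ℕ)
    (L : LSeq α) : NNReal :=
  ∑ C ∈ δ, if ∃ C', CSub C' C ∧ Matches C' L then umaxk p C k else 0

/-- Projected utilization `P_k(L) = u_max(L) + LWU_{k - |L|}(L)`. -/
noncomputable def Pk {α : Type*} (p : α → NNReal) (δ : Finset (CSeq α)) (k : ℕ)
    (L : LSeq α) : NNReal :=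
  umax p δ L + LWU p δ (k - L.length) L


open List in
lemma mySublistForall₂ {β γ : Type*} {R : β → γ → Prop} {l₁ l₂ : List β} {l₃ : List γ}
    (h : l₁.Sublist l₂) (h2 : Forall₂ R l₂ l₃) :
    ∃ l₄, l₄.Sublist l₃ ∧ Forall₂ R l₁ l₄ := by
  induction h generalizing l₃ with
  | slnil => cases h2; exact ⟨[], Sublist.refl _, Forall₂.nil⟩
  | cons a h ih =>
    cases h2 with
    | cons hab h2' =>
      obtain ⟨l₄, hs, hf⟩ := ih h2'
      exact ⟨l₄, hs.trans (sublist_cons_self _ _), hf⟩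
  | cons_cons a h ih =>
    cases h2 with
    | cons hab h2' =>
      obtain ⟨l₄, hs, hf⟩ := ih h2'
      exact ⟨_ :: l₄, hs.cons₂ _, Forall₂.cons hab hf⟩

lemma CContains.trans' {α : Type*} {a b c : CEventset α} (h1 : CContains a b)
    (h2 : CContains b c) : CContains a c :=
  ⟨h1.1.trans h2.1, h1.2.trans h2.2⟩

open List in
lemma myForall₂_trans {α : Type*} {l₁ l₂ l₃ : CSeq α}
    (h1 : Forall₂ CContains l₁ l₂) (h2 : Forall₂ CContains l₂ l₃) :
    Forall₂ CContains l₁ l₃ := by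
  induction h1 generalizing l₃ with
  | nil => cases h2; exact Forall₂.nil
  | cons hab h ih =>
    cases h2 with
    | cons hbc h2' => exact Forall₂.cons (hab.trans' hbc) (ih h2')

lemma CSub.trans' {α : Type*} {C₁ C₂ C₃ : CSeq α} (h1 : CSub C₁ C₂) (h2 : CSub C₂ C₃) :
    CSub C₁ C₃ := by
  obtain ⟨D, hD, hfD⟩ := h1
  obtain ⟨E, hE, hfE⟩ := h2
  obtain ⟨E', hE', hfE'⟩ := mySublistForall₂ hD hfE
  exact ⟨E', hE'.trans hE, myForall₂_trans hfD hfE'⟩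

lemma ue_mono {α : Type*} (p : α → NNReal) {a b : CEventset α} (h : CContains a b) :
    ue p a ≤ ue p b := by
  unfold ue
  rw [h.2]
  exact mul_le_mul_right (Finset.sum_le_sum_of_subset h.1) _

open List in
lemma us_le_of_forall₂ {α : Type*} (p : α → NNReal) {C₁ C₂ : CSeq α}
    (h : Forall₂ CContains C₁ C₂) : us p C₁ ≤ us p C₂ := by
  induction h with
  | nil => exact le_refl _
  | cons hab h ih =>
    simp only [us, map_cons, sum_cons]
    exact add_le_add (ue_mono p hab) ih

lemma us_le_of_sublist {α : Type*} (p : α → NNReal) {C₁ C₂ : CSeq α}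
    (h : C₁.Sublist C₂) : us p C₁ ≤ us p C₂ :=
  List.Sublist.sum_le_sum (h.map (ue p)) (fun _ _ => zero_le)

lemma us_le_of_CSub {α : Type*} (p : α → NNReal) {C₁ C₂ : CSeq α} (h : CSub C₁ C₂) :
    us p C₁ ≤ us p C₂ := by
  obtain ⟨D, hD, hf⟩ := h
  exact (us_le_of_forall₂ p hf).trans (us_le_of_sublist p hD)

open List in
lemma exists_match {α : Type*} {L L₂ : LSeq α} {C₂ : CSeq α}
    (h : Forall₂ (· ⊆ ·) L L₂) (hm : C₂.map Prod.fst = L₂) :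
    ∃ C', C'.map Prod.fst = L ∧ Forall₂ CContains C' C₂ := by
  induction h generalizing C₂ with
  | nil =>
    cases C₂ with
    | nil => exact ⟨[], rfl, Forall₂.nil⟩
    | cons => simp at hm
  | @cons a b l₁ l₂ hab h ih =>
    cases C₂ with
    | nil => simp at hm
    | cons σ C₂' =>
      simp only [map_cons, List.cons.injEq] at hm
      obtain ⟨C', hC'm, hC'f⟩ := ih hm.2
      exact ⟨(a, σ.2) :: C', by simp [hC'm], Forall₂.cons ⟨hm.1 ▸ hab, rfl⟩ hC'f⟩

/-- an unpromising candidate (LWU_k(L) < ξ) has only low-utility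
L-supersequences of length at most k. -/
theorem unpromising_LWU_low_utility {α : Type*} (p : α → NNReal)
    (δ : Finset (CSeq α)) (ξ : NNReal) (k : ℕ) (hk : 0 < k)
    (L : LSeq α) (hL : ∀ c ∈ L, c.Nonempty) (hun : LWU p δ k L < ξ) :
    ∀ L' : LSeq α, (∀ c ∈ L', c.Nonempty) → LSub L L' → L'.length ≤ k →
      umax p δ L' < ξ := by
  intro L' hL' hsub hlen
  refine lt_of_le_of_lt ?_ hun
  unfold umax LWU
  refine Finset.sum_le_sum (fun C _ => ?_)
  by_cases hne : {x | ∃ C', Matches C' L' ∧ CSub C' C ∧ us p C' = x}.Nonempty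
  · obtain ⟨x, C'', hm, hcs, hus⟩ := hne
    -- condition of the `if` holds
    obtain ⟨L₂, hL₂, hf⟩ := hsub
    have hL₂' : L₂.Sublist (C''.map Prod.fst) := hm ▸ hL₂
    obtain ⟨C₂, hC₂s, rfl⟩ := List.sublist_map_iff.mp hL₂'
    obtain ⟨C₀, hC₀m, hC₀f⟩ := exists_match hf rfl
    have hcond : ∃ C', CSub C' C ∧ Matches C' L :=
      ⟨C₀, CSub.trans' ⟨C₂, hC₂s, hC₀f⟩ hcs, hC₀m⟩
    rw [if_pos hcond]
    refine csSup_le ⟨x, C'', hm, hcs, hus⟩ ?_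
    rintro y ⟨D, hDm, hDs, rfl⟩
    have hbdd : BddAbove {x | ∃ C', CSub C' C ∧ C'.length ≤ k ∧ us p C' = x} :=
      ⟨us p C, by rintro z ⟨E, hE, _, rfl⟩; exact us_le_of_CSub p hE⟩
    refine le_csSup hbdd ⟨D, hDs, ?_, rfl⟩
    have : D.length = L'.length := by rw [← hDm, List.length_map]
    omega
  · rw [Set.not_nonempty_iff_eq_empty] at hne
    unfold ulMax
    rw [hne, csSup_empty]
    exact zero_le
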